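/- Let β = 1+ε with 0 < ε, let c > 0 (the cost of a set), let n' ≥ 1, and let L ≥ ⌈log_β(n'/c)⌉ + 1. Suppose a : {0,…,L−1} → ℕ satisfies: (i) a(k) = 0 for all k with β^{k+1}·c < 1; (ii) a(k) < β^{k+1}·c for all k ≤ log_β(n'/c); and (iii) a(k) ≤ n' for all k. Then (1/ε)·∑_{k=0}^{L−1} (β^{−k} − β^{−k−1})·a(k) < (log_β(n') + 2 + 1/ε)·c. -/

import Mathlib

/-- the three-case bound on the weighted sum of `|N_k(s)|`. -/
theorem three_case_level_sum_bound (ε c n' : ℝ) (hε : 0 < ε) (hc : 0 < c)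
    (hn' : 1 ≤ n') (L : ℕ)
    (hL : ⌈Real.logb (1 + ε) (n' / c)⌉ + 1 ≤ (L : ℤ))
    (a : ℕ → ℕ)
    (h1 : ∀ k < L, (1 + ε) ^ ((k : ℤ) + 1) * c < 1 → a k = 0)
    (h2 : ∀ k < L, (k : ℝ) ≤ Real.logb (1 + ε) (n' / c) →
      (a k : ℝ) < (1 + ε) ^ ((k : ℤ) + 1) * c)
    (h3 : ∀ k < L, (a k : ℝ) ≤ n') :
    (1 / ε) * ∑ k ∈ Finset.range L,
        ((1 + ε) ^ (-(k : ℤ)) - (1 + ε) ^ (-(k : ℤ) - 1)) * (a k : ℝ)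
      < (Real.logb (1 + ε) n' + 2 + 1 / ε) * c := by
  have hβ : 1 < 1 + ε := by linarith
  have hβ0 : (0:ℝ) < 1 + ε := by linarith
  have hβne : (1+ε) ≠ 0 := ne_of_gt hβ0
  have hβne1 : (1+ε) ≠ 1 := by intro h; nlinarith
  have hn0 : (0:ℝ) < n' := by linarith
  have hnc : 0 < n' / c := div_pos hn0 hc
  have hlogn : 0 ≤ Real.logb (1+ε) n' := Real.logb_nonneg hβ hn'
  set T := Real.logb (1+ε) (n'/c) with hT
  set N : ℕ := (⌊T⌋ + 1).toNat with hN
  set J : ℕ := min (⌈-Real.logb (1+ε) c - 1⌉.toNat) N with hJ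
  have hJN : J ≤ N := min_le_right _ _
  have hNL : N ≤ L := by
    rw [hN, Int.toNat_le]
    have := Int.floor_le_ceil T
    omega
  -- rewrite the LHS
  have hLHS : (1 / ε) * ∑ k ∈ Finset.range L,
        ((1 + ε) ^ (-(k : ℤ)) - (1 + ε) ^ (-(k : ℤ) - 1)) * (a k : ℝ)
      = ∑ k ∈ Finset.range L, (1+ε) ^ (-(k:ℤ) - 1) * (a k : ℝ) := by
    rw [Finset.mul_sum]
    refine Finset.sum_congr rfl fun k _ => ?_
    have hz : (1+ε) ^ (-(k : ℤ)) = (1+ε) ^ (-(k:ℤ) - 1) * (1+ε) := by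
      rw [← zpow_add_one₀ hβne]; ring_nf
    rw [hz]
    field_simp
    ring
  rw [hLHS, ← Finset.sum_range_add_sum_Ico _ hNL, ← Finset.sum_range_add_sum_Ico _ hJN]
  -- first block is zero
  have hS0 : ∑ k ∈ Finset.range J, (1+ε) ^ (-(k:ℤ) - 1) * (a k : ℝ) = 0 := by
    apply Finset.sum_eq_zero
    intro k hk
    have hkJ : k < J := Finset.mem_range.mp hk
    have hka : a k = 0 := by
      apply h1 k (lt_of_lt_of_le hkJ (hJN.trans hNL))
      have hkU : (k:ℝ) < -Real.logb (1+ε) c - 1 := by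
        have h1' : (k:ℤ) < ⌈-Real.logb (1+ε) c - 1⌉ := by
          exact_mod_cast Int.lt_toNat.mp (lt_of_lt_of_le hkJ (min_le_left _ _))
        have h2' : ((⌈-Real.logb (1+ε) c - 1⌉ : ℤ):ℝ) < (-Real.logb (1+ε) c - 1) + 1 :=
          Int.ceil_lt_add_one _
        have h3' : ((k:ℝ)) + 1 ≤ ((⌈-Real.logb (1+ε) c - 1⌉ : ℤ):ℝ) := by
          exact_mod_cast h1'
        linarith
      have hzc : ((1+ε):ℝ)^((k:ℤ)+1) = (1+ε)^(((k:ℝ))+1) := by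
        rw [← Real.rpow_intCast (1+ε) ((k:ℤ)+1)]
        push_cast
        ring_nf
      have hrc : (1+ε)^(-Real.logb (1+ε) c) = c⁻¹ := by
        rw [Real.rpow_neg hβ0.le, Real.rpow_logb hβ0 hβne1 hc]
      have hlt : (1+ε)^(((k:ℝ))+1) < (1+ε)^(-Real.logb (1+ε) c) :=
        (Real.rpow_lt_rpow_left_iff hβ).mpr (by linarith)
      calc (1+ε)^((k:ℤ)+1) * c < c⁻¹ * c := by
            rw [hzc, ← hrc]; exact mul_lt_mul_of_pos_right hlt hc
        _ = 1 := inv_mul_cancel₀ (ne_of_gt hc)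
    simp [hka]
  -- middle block
  have hSmid : ∑ k ∈ Finset.Ico J N, (1+ε) ^ (-(k:ℤ) - 1) * (a k : ℝ)
      ≤ (Real.logb (1+ε) n' + 2) * c := by
    have hbound : ∀ k ∈ Finset.Ico J N, (1+ε) ^ (-(k:ℤ) - 1) * (a k : ℝ) ≤ c := by
      intro k hk
      have hkN : k < N := (Finset.mem_Ico.mp hk).2
      have hkT : (k:ℝ) ≤ T := by
        have h1' : (k:ℤ) < ⌊T⌋ + 1 := Int.lt_toNat.mp hkN
        have h2' : ((k:ℤ):ℝ) ≤ (⌊T⌋:ℝ) := by exact_mod_cast Int.lt_add_one_iff.mp h1'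
        have := Int.floor_le T
        push_cast at h2'
        linarith
      have ha := h2 k (lt_of_lt_of_le hkN hNL) hkT
      have hzpos : (0:ℝ) ≤ (1+ε) ^ (-(k:ℤ) - 1) := le_of_lt (zpow_pos hβ0 _)
      calc (1+ε) ^ (-(k:ℤ) - 1) * (a k : ℝ)
          ≤ (1+ε) ^ (-(k:ℤ) - 1) * ((1+ε) ^ ((k:ℤ)+1) * c) :=
            mul_le_mul_of_nonneg_left (le_of_lt ha) hzpos
        _ = c := by
            rw [← mul_assoc, ← zpow_add₀ hβne]
            norm_num
    have hcard := Finset.sum_le_card_nsmul _ _ _ hbound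
    rw [Nat.card_Ico, nsmul_eq_mul] at hcard
    refine hcard.trans ?_
    have hcount : ((N - J : ℕ):ℝ) ≤ Real.logb (1+ε) n' + 2 := by
      rcases eq_or_lt_of_le hJN with h | h
      · simp [h]; linarith
      · have hN0 : 0 < N := Nat.pos_of_ne_zero (by omega)
        have hfloor : (0:ℤ) < ⌊T⌋ + 1 := by
          by_contra hcon
          push_neg at hcon
          rw [hN] at hN0
          omega
        have hNval : (N:ℝ) = (⌊T⌋:ℝ) + 1 := by
          have hh := Int.toNat_of_nonneg hfloor.le
          rw [hN]
          exact_mod_cast hh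
        have hJval : J = ⌈-Real.logb (1+ε) c - 1⌉.toNat := by
          rw [hJ]
          exact min_eq_left (by omega)
        have hJge : (-Real.logb (1+ε) c - 1) ≤ (J:ℝ) := by
          rw [hJval]
          calc (-Real.logb (1+ε) c - 1) ≤ ((⌈-Real.logb (1+ε) c - 1⌉:ℤ):ℝ) := Int.le_ceil _
            _ ≤ ((⌈-Real.logb (1+ε) c - 1⌉.toNat : ℕ):ℝ) := by exact_mod_cast Int.self_le_toNat _
        have hTle : (⌊T⌋:ℝ) ≤ T := Int.floor_le T
        have hTval : T = Real.logb (1+ε) n' - Real.logb (1+ε) c :=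
          Real.logb_div (ne_of_gt hn0) (ne_of_gt hc)
        rw [Nat.cast_sub hJN]
        linarith
    nlinarith
  -- high block
  have hShigh : ∑ k ∈ Finset.Ico N L, (1+ε) ^ (-(k:ℤ) - 1) * (a k : ℝ) < (1/ε) * c := by
    have hstep : ∑ k ∈ Finset.Ico N L, (1+ε) ^ (-(k:ℤ) - 1) * (a k : ℝ)
        ≤ ∑ k ∈ Finset.Ico N L, (1+ε) ^ (-(k:ℤ) - 1) * n' := by
      apply Finset.sum_le_sum
      intro k hk
      exact mul_le_mul_of_nonneg_left (h3 k (Finset.mem_Ico.mp hk).2) (le_of_lt (zpow_pos hβ0 _))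
    refine lt_of_le_of_lt hstep ?_
    rw [Finset.sum_Ico_eq_sum_range]
    have hterm : ∀ j, (1+ε)^(-((N+j:ℕ):ℤ)-1) * n'
        = ((1+ε)^(-(N:ℤ)-1) * n') * ((1+ε)⁻¹)^j := by
      intro j
      have he : (-((N+j:ℕ):ℤ)-1) = (-(N:ℤ)-1) + (-(j:ℤ)) := by push_cast; ring
      rw [he, zpow_add₀ hβne, zpow_neg, ← inv_zpow, zpow_natCast]
      ring
    simp only [hterm]
    rw [← Finset.mul_sum]
    have hApos : 0 < (1+ε)^(-(N:ℤ)-1) * n' := mul_pos (zpow_pos hβ0 _) hn0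
    have hgeom : ∑ j ∈ Finset.range (L - N), ((1+ε)⁻¹)^j < (1+ε)/ε := by
      have hr1 : (1+ε)⁻¹ < 1 := inv_lt_one_of_one_lt₀ hβ
      have hr0 : (0:ℝ) < (1+ε)⁻¹ := inv_pos.mpr hβ0
      have hmul := geom_sum_mul ((1+ε)⁻¹) (L - N)
      have hxm : 0 < ((1+ε)⁻¹)^(L-N) := pow_pos hr0 _
      have hA : ((1+ε)⁻¹ - 1) * (1+ε) = -ε := by field_simp; ring
      rw [lt_div_iff₀ hε]
      nlinarith [hmul, hxm, hβ0]
    have h2' : ((1+ε)^(-(N:ℤ)-1) * n') * (∑ j ∈ Finset.range (L - N), ((1+ε)⁻¹)^j)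
        < ((1+ε)^(-(N:ℤ)-1) * n') * ((1+ε)/ε) := by
      exact mul_lt_mul_of_pos_left hgeom hApos
    refine h2'.trans_le ?_
    -- show ((1+ε)^(-(N:ℤ)-1) * n') * ((1+ε)/ε) ≤ (1/ε) * c
    have hNT : T < (N:ℝ) := by
      have h1' : (⌊T⌋:ℤ) + 1 ≤ (N:ℤ) := by
        rw [hN]; exact_mod_cast Int.self_le_toNat _
      have h2' : ((⌊T⌋:ℝ)) + 1 ≤ (N:ℝ) := by exact_mod_cast h1'
      have := Int.lt_floor_add_one T
      linarith
    have hpow : n'/c ≤ (1+ε)^(N:ℕ) := by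
      have : (1+ε)^T ≤ (1+ε)^((N:ℝ)) := (Real.rpow_le_rpow_left_iff hβ).mpr hNT.le
      rw [Real.rpow_logb hβ0 hβne1 hnc, Real.rpow_natCast] at this
      exact this
    have hle : n' * (1+ε)^(-(N:ℤ)) ≤ c := by
      have hp : (0:ℝ) < (1+ε)^(N:ℕ) := pow_pos hβ0 _
      have hz : ((1+ε):ℝ) ^ (-(N:ℤ)) = ((1+ε)^(N:ℕ))⁻¹ := by
        rw [zpow_neg, zpow_natCast]
      rw [hz]
      calc n' * ((1+ε)^(N:ℕ))⁻¹ ≤ ((1+ε)^(N:ℕ) * c) * ((1+ε)^(N:ℕ))⁻¹ := by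
            apply mul_le_mul_of_nonneg_right _ (inv_nonneg.mpr hp.le)
            rw [div_le_iff₀ hc] at hpow
            linarith
        _ = c := by field_simp
    have heq : ((1+ε)^(-(N:ℤ)-1) * n') * ((1+ε)/ε) = (n' * (1+ε)^(-(N:ℤ))) / ε := by
      rw [show (-(N:ℤ)-1) = (-(N:ℤ)) + (-1) from by ring, zpow_add₀ hβne, zpow_neg_one]
      field_simp
    rw [heq]
    rw [div_le_iff₀ hε]
    have : (1/ε) * c * ε = c := by field_simp
    rw [this]
    exact hle
  linarith [hS0, hSmid, hShigh, mul_pos hc hε]
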